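/- Let 𝒬 ⊆ 𝒟 be uniformly integrable and suppose R ∈ L¹ is such that R𝒬 = {RZ : Z ∈ 𝒬} is uniformly integrable. Let 𝒬̄ denote the L¹-closure of 𝒬. Then 𝒬̄ and R𝒬̄ are uniformly integrable, and the map Z ↦ 𝔼[-Z(R-r)] from 𝒬̄ to ℝ is continuous with respect to the L¹-norm. -/

import Mathlib

open MeasureTheory Filter
open scoped ENNReal

namespace Stmt9Aux

variable {Ω : Type*} [MeasurableSpace Ω] {ℙ : Measure Ω}

noncomputable def ui (ℙ : Measure Ω) (G : Set (Ω → ℝ)) (b : ℝ) : ℝ≥0∞ :=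
  ⨆ Y ∈ G, ∫⁻ ω in {ω | b < |Y ω|}, ENNReal.ofReal |Y ω| ∂ℙ

lemma le_ui {G : Set (Ω → ℝ)} {Y : Ω → ℝ} (hY : Y ∈ G) (b : ℝ) :
    ∫⁻ ω in {ω | b < |Y ω|}, ENNReal.ofReal |Y ω| ∂ℙ ≤ ui ℙ G b := by
  rw [ui]
  exact le_iSup₂ (f := fun (Y : Ω → ℝ) (_ : Y ∈ G) =>
    ∫⁻ ω in {ω | b < |Y ω|}, ENNReal.ofReal |Y ω| ∂ℙ) Y hY

/-- Split lemma: set integral of |g| over any set A is bounded by tail + b·ℙA. -/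
lemma lintegral_split {g : Ω → ℝ} (hg : AEMeasurable g ℙ) (A : Set Ω) {b : ℝ} (hb : 0 ≤ b) :
    ∫⁻ ω in A, ENNReal.ofReal |g ω| ∂ℙ ≤
      (∫⁻ ω in {ω | b < |g ω|}, ENNReal.ofReal |g ω| ∂ℙ) + ENNReal.ofReal b * ℙ A := by
  set g' := hg.mk g with hg'def
  have hmeas : Measurable g' := hg.measurable_mk
  have hae : g =ᵐ[ℙ] g' := hg.ae_eq_mk
  have h1 : ∫⁻ ω in A, ENNReal.ofReal |g ω| ∂ℙ = ∫⁻ ω in A, ENNReal.ofReal |g' ω| ∂ℙ :=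
    lintegral_congr_ae (ae_restrict_of_ae (hae.mono fun ω h => by simp only [h]))
  have h2 : ∫⁻ ω in {ω | b < |g ω|}, ENNReal.ofReal |g ω| ∂ℙ
      = ∫⁻ ω in {ω | b < |g' ω|}, ENNReal.ofReal |g' ω| ∂ℙ := by
    have hset : {ω | b < |g ω|} =ᵐ[ℙ] {ω | b < |g' ω|} := by
      refine hae.mono fun ω h => ?_
      change (b < |g ω|) = (b < |g' ω|)
      rw [h]
    rw [Measure.restrict_congr_set hset]
    exact lintegral_congr_ae (ae_restrict_of_ae (hae.mono fun ω h => by simp only [h]))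
  rw [h1, h2]
  have hS : MeasurableSet {ω | b < |g' ω|} := measurableSet_lt measurable_const hmeas.abs
  have key : ∫⁻ ω in A, ({ω | b < |g' ω|}.indicator (fun ω => ENNReal.ofReal |g' ω|)) ω ∂ℙ
      ≤ ∫⁻ ω in {ω | b < |g' ω|}, ENNReal.ofReal |g' ω| ∂ℙ := by
    rw [lintegral_indicator hS, Measure.restrict_restrict hS]
    exact lintegral_mono_set Set.inter_subset_left
  calc ∫⁻ ω in A, ENNReal.ofReal |g' ω| ∂ℙ
      ≤ ∫⁻ ω in A, ({ω | b < |g' ω|}.indicator (fun ω => ENNReal.ofReal |g' ω|) ω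
          + ENNReal.ofReal b) ∂ℙ := by
        refine lintegral_mono fun ω => ?_
        by_cases h : b < |g' ω|
        · rw [Set.indicator_of_mem (show ω ∈ {ω | b < |g' ω|} from h)]; exact le_self_add
        · exact le_add_left (ENNReal.ofReal_le_ofReal (not_lt.mp h))
    _ = (∫⁻ ω in A, {ω | b < |g' ω|}.indicator (fun ω => ENNReal.ofReal |g' ω|) ω ∂ℙ)
          + ENNReal.ofReal b * ℙ A := by
        rw [lintegral_add_right _ measurable_const, setLIntegral_const]
    _ ≤ _ := add_le_add_left key _

/-- Fatou for |·| along an a.e. convergent sequence. -/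
lemma fatou_abs {g : Ω → ℝ} {Y : ℕ → Ω → ℝ} (hY : ∀ k, AEMeasurable (Y k) ℙ)
    (hconv : ∀ᵐ ω ∂ℙ, Tendsto (fun k => Y k ω) atTop (nhds (g ω))) (A : Set Ω) :
    ∫⁻ ω in A, ENNReal.ofReal |g ω| ∂ℙ ≤
      atTop.liminf fun k => ∫⁻ ω in A, ENNReal.ofReal |Y k ω| ∂ℙ := by
  have h1 : ∀ᵐ ω ∂ℙ.restrict A,
      ENNReal.ofReal |g ω| = atTop.liminf fun k => ENNReal.ofReal |Y k ω| := by
    refine ae_restrict_of_ae (hconv.mono fun ω h => ?_)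
    exact ((ENNReal.tendsto_ofReal h.abs).liminf_eq).symm
  calc ∫⁻ ω in A, ENNReal.ofReal |g ω| ∂ℙ
      = ∫⁻ ω in A, atTop.liminf (fun k => ENNReal.ofReal |Y k ω|) ∂ℙ := lintegral_congr_ae h1
    _ ≤ atTop.liminf fun k => ∫⁻ ω in A, ENNReal.ofReal |Y k ω| ∂ℙ :=
        lintegral_liminf_le' fun k =>
          (ENNReal.measurable_ofReal.comp continuous_abs.measurable).comp_aemeasurable
            ((hY k).restrict)


/-- approximation data for a function in the closure -/
def ApproxData (ℙ : Measure Ω) (𝒬 : Set (Ω → ℝ)) (g : Ω → ℝ) : Prop :=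
  ∃ Y : ℕ → Ω → ℝ, (∀ k, Y k ∈ 𝒬) ∧ (∀ k, AEMeasurable (Y k) ℙ) ∧
    ∀ᵐ ω ∂ℙ, Tendsto (fun k => Y k ω) atTop (nhds (g ω))

/-- A limit of members of `G` obeys the uniform bound of `G` on every set. -/
lemma closure_bound {G : Set (Ω → ℝ)} {g : Ω → ℝ} {Y : ℕ → Ω → ℝ}
    (hYG : ∀ k, Y k ∈ G) (hYae : ∀ k, AEMeasurable (Y k) ℙ)
    (hconv : ∀ᵐ ω ∂ℙ, Tendsto (fun k => Y k ω) atTop (nhds (g ω)))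
    (A : Set Ω) {b : ℝ} (hb : 0 ≤ b) :
    ∫⁻ ω in A, ENNReal.ofReal |g ω| ∂ℙ ≤ ui ℙ G b + ENNReal.ofReal b * ℙ A := by
  refine (fatou_abs hYae hconv A).trans ?_
  have h : ∀ k, (∫⁻ ω in A, ENNReal.ofReal |Y k ω| ∂ℙ)
      ≤ ui ℙ G b + ENNReal.ofReal b * ℙ A := fun k =>
    (lintegral_split (hYae k) A hb).trans (add_le_add_left (le_ui (hYG k) b) _)
  have := liminf_le_liminf (f := atTop) (Eventually.of_forall h)
  rwa [liminf_const] at this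

/-- Extract an a.e. convergent subsequence from L¹ convergence. -/
lemma exists_subseq_ae {Z : Ω → ℝ} (hZ : Integrable Z ℙ) {f : ℕ → Ω → ℝ}
    (hfi : ∀ n, Integrable (f n) ℙ)
    (hconv : Tendsto (fun n => ∫ ω, |f n ω - Z ω| ∂ℙ) atTop (nhds 0)) :
    ∃ φ : ℕ → ℕ, StrictMono φ ∧
      ∀ᵐ ω ∂ℙ, Tendsto (fun k => f (φ k) ω) atTop (nhds (Z ω)) := by
  have hsn : ∀ n, eLpNorm (f n - Z) 1 ℙ = ENNReal.ofReal (∫ ω, |f n ω - Z ω| ∂ℙ) := by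
    intro n
    rw [eLpNorm_one_eq_lintegral_enorm,
      ← ofReal_integral_norm_eq_lintegral_enorm ((hfi n).sub hZ)]
    simp [Real.norm_eq_abs]
  have h0 : Tendsto (fun n => eLpNorm (f n - Z) 1 ℙ) atTop (nhds 0) := by
    have := ENNReal.tendsto_ofReal hconv
    simpa [hsn] using this
  have htm : TendstoInMeasure ℙ f atTop Z :=
    tendstoInMeasure_of_tendsto_eLpNorm one_ne_zero
      (fun n => (hfi n).aestronglyMeasurable) hZ.aestronglyMeasurable h0
  exact htm.exists_seq_tendsto_ae

/-- Master uniform integrability lemma for "closures". -/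
lemma ui_tendsto [IsProbabilityMeasure ℙ] {G H : Set (Ω → ℝ)}
    (hGUI : Tendsto (fun a : ℝ => ui ℙ G a) atTop (nhds 0))
    (hH : ∀ g ∈ H, AEMeasurable g ℙ ∧ ApproxData ℙ G g) :
    Tendsto (fun a : ℝ => ui ℙ H a) atTop (nhds 0) := by
  -- a finite uniform bound on L¹ norms over H
  obtain ⟨b₀, hb₀0, hb₀⟩ : ∃ b₀ : ℝ, 0 ≤ b₀ ∧ ui ℙ G b₀ ≤ 1 := by
    have h1 := (ENNReal.tendsto_nhds_zero.mp hGUI 1 zero_lt_one).and (eventually_ge_atTop (0:ℝ))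
    obtain ⟨b₀, hb₁, hb₂⟩ := h1.exists
    exact ⟨b₀, hb₂, hb₁⟩
  set C : ℝ≥0∞ := 1 + ENNReal.ofReal b₀ with hCdef
  have hCne : C ≠ ⊤ := by simp [hCdef]
  have hC : ∀ g ∈ H, ∫⁻ ω, ENNReal.ofReal |g ω| ∂ℙ ≤ C := by
    intro g hg
    obtain ⟨hgae, Y, hYG, hYae, hYc⟩ := hH g hg
    have := closure_bound hYG hYae hYc Set.univ hb₀0
    rw [Measure.restrict_univ] at this
    refine this.trans ?_
    rw [hCdef, measure_univ, mul_one]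
    exact add_le_add hb₀ le_rfl
  -- Markov bound
  have hMarkov : ∀ g ∈ H, ∀ a : ℝ, 0 < a →
      ℙ {ω | a < |g ω|} ≤ C / ENNReal.ofReal a := by
    intro g hg a ha
    have hgae := (hH g hg).1
    have hsub : {ω | a < |g ω|} ⊆ {ω | ENNReal.ofReal a ≤ ENNReal.ofReal |g ω|} :=
      fun ω h => ENNReal.ofReal_le_ofReal (le_of_lt h)
    have hmono := measure_mono (μ := ℙ) hsub
    have hcheb := mul_meas_ge_le_lintegral₀
      ((ENNReal.measurable_ofReal.comp continuous_abs.measurable).comp_aemeasurable hgae)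
      (ENNReal.ofReal a)
    have : ENNReal.ofReal a * ℙ {ω | a < |g ω|} ≤ C :=
      le_trans (mul_le_mul_right hmono _) (hcheb.trans (hC g hg))
    rw [ENNReal.le_div_iff_mul_le (Or.inl (ENNReal.ofReal_pos.mpr ha).ne')
      (Or.inl ENNReal.ofReal_ne_top)]
    rwa [mul_comm]
  -- main estimate
  rw [ENNReal.tendsto_nhds_zero]
  intro ε hε
  obtain ⟨δ, hδ0, hδε⟩ : ∃ δ : ℝ, 0 < δ ∧ ENNReal.ofReal δ ≤ ε := by
    rcases eq_or_ne ε ⊤ with h | h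
    · exact ⟨1, one_pos, by simp [h]⟩
    · exact ⟨ε.toReal, ENNReal.toReal_pos hε.ne' h, by rw [ENNReal.ofReal_toReal h]⟩
  obtain ⟨b, hb0, hbui⟩ : ∃ b : ℝ, 0 ≤ b ∧ ui ℙ G b ≤ ENNReal.ofReal (δ / 2) := by
    have h1 := (ENNReal.tendsto_nhds_zero.mp hGUI _
      (ENNReal.ofReal_pos.mpr (div_pos hδ0 two_pos))).and (eventually_ge_atTop (0:ℝ))
    obtain ⟨b, hb₁, hb₂⟩ := h1.exists
    exact ⟨b, hb₂, hb₁⟩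
  filter_upwards [eventually_ge_atTop (max 1 (2 * b * C.toReal / δ))] with a ha
  have ha1 : (1:ℝ) ≤ a := le_trans (le_max_left _ _) ha
  have ha0 : (0:ℝ) < a := lt_of_lt_of_le one_pos ha1
  refine iSup₂_le fun g hg => ?_
  obtain ⟨hgae, Y, hYG, hYae, hYc⟩ := hH g hg
  have step1 := closure_bound hYG hYae hYc {ω | a < |g ω|} hb0
  refine step1.trans ?_
  have step2 : ENNReal.ofReal b * ℙ {ω | a < |g ω|} ≤ ENNReal.ofReal (δ / 2) := by
    calc ENNReal.ofReal b * ℙ {ω | a < |g ω|}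
        ≤ ENNReal.ofReal b * (C / ENNReal.ofReal a) :=
          mul_le_mul_right (hMarkov g hg a ha0) _
      _ = ENNReal.ofReal b * (ENNReal.ofReal C.toReal / ENNReal.ofReal a) := by
          rw [ENNReal.ofReal_toReal hCne]
      _ = ENNReal.ofReal (b * (C.toReal / a)) := by
          rw [ENNReal.ofReal_mul hb0, ENNReal.ofReal_div_of_pos ha0]
      _ ≤ ENNReal.ofReal (δ / 2) := by
          apply ENNReal.ofReal_le_ofReal
          have hC0 : 0 ≤ C.toReal := ENNReal.toReal_nonneg
          have ha' : 2 * b * C.toReal / δ ≤ a := le_trans (le_max_right _ _) ha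
          rw [div_le_iff₀ hδ0] at ha'
          rw [mul_div_assoc', div_le_div_iff₀ ha0 two_pos]
          nlinarith
  calc ui ℙ G b + ENNReal.ofReal b * ℙ {ω | a < |g ω|}
      ≤ ENNReal.ofReal (δ / 2) + ENNReal.ofReal (δ / 2) := add_le_add hbui step2
    _ = ENNReal.ofReal δ := by
        rw [← ENNReal.ofReal_add (by positivity) (by positivity)]; norm_num
    _ ≤ ε := hδε


lemma prod_bound {𝒬 : Set (Ω → ℝ)} {R R' g : Ω → ℝ} {r : ℝ}
    (hRR' : R =ᵐ[ℙ] R') (hRae : AEMeasurable R ℙ) (hgae : AEMeasurable g ℙ)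
    {Y : ℕ → Ω → ℝ} (hYG : ∀ k, Y k ∈ 𝒬) (hYae : ∀ k, AEMeasurable (Y k) ℙ)
    (hYc : ∀ᵐ ω ∂ℙ, Tendsto (fun k => Y k ω) atTop (nhds (g ω)))
    (A : Set Ω) {c : ℝ} (hc : 0 ≤ c) :
    ∫⁻ ω in A, ENNReal.ofReal (|R' ω - r| * |g ω|) ∂ℙ ≤
      ui ℙ ((fun Z => fun ω => R ω * Z ω) '' 𝒬) c + ENNReal.ofReal |r| * ui ℙ 𝒬 c
        + (1 + ENNReal.ofReal |r|) * (ENNReal.ofReal c * ℙ A) := by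
  have hRgae : AEMeasurable (fun ω => R ω * g ω) ℙ := hRae.mul hgae
  have step1 : ∫⁻ ω in A, ENNReal.ofReal (|R' ω - r| * |g ω|) ∂ℙ ≤
      (∫⁻ ω in A, ENNReal.ofReal |R ω * g ω| ∂ℙ)
        + ENNReal.ofReal |r| * ∫⁻ ω in A, ENNReal.ofReal |g ω| ∂ℙ := by
    have hpt : ∀ᵐ ω ∂ℙ.restrict A, ENNReal.ofReal (|R' ω - r| * |g ω|) ≤
        ENNReal.ofReal |R ω * g ω| + ENNReal.ofReal |r| * ENNReal.ofReal |g ω| := by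
      refine ae_restrict_of_ae (hRR'.mono fun ω h => ?_)
      rw [← ENNReal.ofReal_mul (abs_nonneg _), ← ENNReal.ofReal_add (abs_nonneg _)
        (by positivity)]
      refine ENNReal.ofReal_le_ofReal ?_
      rw [← h, abs_mul, ← add_mul]
      refine mul_le_mul_of_nonneg_right ?_ (abs_nonneg _)
      exact (abs_sub _ _).trans (le_refl _)
    calc ∫⁻ ω in A, ENNReal.ofReal (|R' ω - r| * |g ω|) ∂ℙ
        ≤ ∫⁻ ω in A, (ENNReal.ofReal |R ω * g ω|
            + ENNReal.ofReal |r| * ENNReal.ofReal |g ω|) ∂ℙ := lintegral_mono_ae hpt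
      _ = (∫⁻ ω in A, ENNReal.ofReal |R ω * g ω| ∂ℙ)
            + ∫⁻ ω in A, ENNReal.ofReal |r| * ENNReal.ofReal |g ω| ∂ℙ :=
          lintegral_add_left'
            ((ENNReal.measurable_ofReal.comp continuous_abs.measurable).comp_aemeasurable
              hRgae.restrict) _
      _ = (∫⁻ ω in A, ENNReal.ofReal |R ω * g ω| ∂ℙ)
            + ENNReal.ofReal |r| * ∫⁻ ω in A, ENNReal.ofReal |g ω| ∂ℙ := by
          rw [lintegral_const_mul' _ _ ENNReal.ofReal_ne_top]
  have hRY : ∀ k, (fun ω => R ω * Y k ω) ∈ ((fun Z => fun ω => R ω * Z ω) '' 𝒬) :=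
    fun k => ⟨Y k, hYG k, rfl⟩
  have hRYae : ∀ k, AEMeasurable (fun ω => R ω * Y k ω) ℙ := fun k => hRae.mul (hYae k)
  have hRYc : ∀ᵐ ω ∂ℙ, Tendsto (fun k => R ω * Y k ω) atTop (nhds (R ω * g ω)) :=
    hYc.mono fun ω h => h.const_mul (R ω)
  have b1 := closure_bound hRY hRYae hRYc A hc
  have b2 := closure_bound hYG hYae hYc A hc
  calc ∫⁻ ω in A, ENNReal.ofReal (|R' ω - r| * |g ω|) ∂ℙ
      ≤ (∫⁻ ω in A, ENNReal.ofReal |R ω * g ω| ∂ℙ)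
          + ENNReal.ofReal |r| * ∫⁻ ω in A, ENNReal.ofReal |g ω| ∂ℙ := step1
    _ ≤ (ui ℙ ((fun Z => fun ω => R ω * Z ω) '' 𝒬) c + ENNReal.ofReal c * ℙ A)
          + ENNReal.ofReal |r| * (ui ℙ 𝒬 c + ENNReal.ofReal c * ℙ A) :=
        add_le_add b1 (mul_le_mul_right b2 _)
    _ = _ := by ring


lemma aemeasurable_abs {h : Ω → ℝ} (hh : AEMeasurable h ℙ) :
    AEMeasurable (fun ω => |h ω|) ℙ :=
  continuous_abs.measurable.comp_aemeasurable hh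

lemma key_tendsto [IsProbabilityMeasure ℙ] {𝒬 : Set (Ω → ℝ)} {R : Ω → ℝ} {r : ℝ}
    (h𝒬UI : Tendsto (fun a : ℝ => ui ℙ 𝒬 a) atTop (nhds 0))
    (hRQ : Tendsto (fun a : ℝ => ui ℙ ((fun Z => fun ω => R ω * Z ω) '' 𝒬) a) atTop (nhds 0))
    (hR : Integrable R ℙ)
    {Z : Ω → ℝ} (hZint : Integrable Z ℙ) (hZap : ApproxData ℙ 𝒬 Z)
    {f : ℕ → Ω → ℝ} (hfint : ∀ n, Integrable (f n) ℙ) (hfap : ∀ n, ApproxData ℙ 𝒬 (f n))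
    (hconv : Tendsto (fun n => ∫ ω, |f n ω - Z ω| ∂ℙ) atTop (nhds 0)) :
    Tendsto (fun n => ∫⁻ ω, ENNReal.ofReal (|f n ω - Z ω| * |R ω - r|) ∂ℙ) atTop (nhds 0) := by
  have hRae : AEMeasurable R ℙ := hR.aemeasurable
  set R' := hRae.mk R with hR'def
  have hmR' : Measurable R' := hRae.measurable_mk
  have hRR' : R =ᵐ[ℙ] R' := hRae.ae_eq_mk
  set κ := ∫ ω, |R ω - r| ∂ℙ with hκdef
  have hκ0 : 0 ≤ κ := integral_nonneg fun ω => abs_nonneg _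
  have hRrint : Integrable (fun ω => R ω - r) ℙ := hR.sub (integrable_const r)
  have hK : ∫⁻ ω, ENNReal.ofReal |R' ω - r| ∂ℙ = ENNReal.ofReal κ := by
    rw [show (∫⁻ ω, ENNReal.ofReal |R' ω - r| ∂ℙ) = ∫⁻ ω, ENNReal.ofReal |R ω - r| ∂ℙ from
      lintegral_congr_ae (hRR'.mono fun ω h => by simp only [h]),
      ← ofReal_integral_eq_lintegral_ofReal hRrint.abs
        (Eventually.of_forall fun ω => abs_nonneg _)]
  rw [ENNReal.tendsto_nhds_zero]
  intro ε hε
  obtain ⟨δ, hδ0, hδε⟩ : ∃ δ : ℝ, 0 < δ ∧ ENNReal.ofReal δ ≤ ε := by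
    rcases eq_or_ne ε ⊤ with h | h
    · exact ⟨1, one_pos, by simp [h]⟩
    · exact ⟨ε.toReal, ENNReal.toReal_pos hε.ne' h, by rw [ENNReal.ofReal_toReal h]⟩
  have h8m : (0:ℝ) < 8 * (|r| + 1) := by positivity
  obtain ⟨c, hc0, hcR, hcQ⟩ : ∃ c : ℝ, 0 ≤ c ∧
      ui ℙ ((fun Z => fun ω => R ω * Z ω) '' 𝒬) c ≤ ENNReal.ofReal (δ / 8) ∧
      ui ℙ 𝒬 c ≤ ENNReal.ofReal (δ / (8 * (|r| + 1))) := by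
    have h1 := (ENNReal.tendsto_nhds_zero.mp hRQ _
        (ENNReal.ofReal_pos.mpr (div_pos hδ0 (show (0:ℝ) < 8 by norm_num)))).and
      ((ENNReal.tendsto_nhds_zero.mp h𝒬UI _
        (ENNReal.ofReal_pos.mpr (div_pos hδ0 h8m))).and (eventually_ge_atTop (0:ℝ)))
    obtain ⟨c, h2, h3, h4⟩ := h1.exists
    exact ⟨c, h4, h2, h3⟩
  set b := max 1 (8 * (1 + |r|) * c * κ / δ) with hbdef
  have hb1 : (1:ℝ) ≤ b := le_max_left _ _
  have hb0 : (0:ℝ) < b := lt_of_lt_of_le one_pos hb1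
  set A := {ω | b < |R' ω - r|} with hAdef
  have hA : MeasurableSet A := measurableSet_lt measurable_const (hmR'.sub_const r).abs
  have hPA : ℙ A ≤ ENNReal.ofReal (κ / b) := by
    have hsub : A ⊆ {ω | ENNReal.ofReal b ≤ ENNReal.ofReal |R' ω - r|} :=
      fun ω h => ENNReal.ofReal_le_ofReal (le_of_lt h)
    have hcheb := mul_meas_ge_le_lintegral₀ (μ := ℙ)
      (f := fun ω => ENNReal.ofReal |R' ω - r|)
      ((ENNReal.measurable_ofReal.comp (hmR'.sub_const r).abs).aemeasurable)
      (ENNReal.ofReal b)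
    rw [hK] at hcheb
    have h1 : ENNReal.ofReal b * ℙ A ≤ ENNReal.ofReal κ :=
      le_trans (mul_le_mul_right (measure_mono hsub) _) hcheb
    rw [ENNReal.ofReal_div_of_pos hb0, ENNReal.le_div_iff_mul_le
      (Or.inl (ENNReal.ofReal_pos.mpr hb0).ne') (Or.inl ENNReal.ofReal_ne_top)]
    rwa [mul_comm]
  -- per-function bound
  have perg : ∀ g : Ω → ℝ, AEMeasurable g ℙ → ApproxData ℙ 𝒬 g →
      ∫⁻ ω in A, ENNReal.ofReal (|R' ω - r| * |g ω|) ∂ℙ ≤ ENNReal.ofReal (3 * δ / 8) := by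
    intro g hgae ⟨Y, hYG, hYae, hYc⟩
    refine (prod_bound hRR' hRae hgae hYG hYae hYc A hc0).trans ?_
    have e1 : ui ℙ ((fun Z => fun ω => R ω * Z ω) '' 𝒬) c ≤ ENNReal.ofReal (δ / 8) := hcR
    have e2 : ENNReal.ofReal |r| * ui ℙ 𝒬 c ≤ ENNReal.ofReal (δ / 8) := by
      refine le_trans (mul_le_mul_right hcQ _) ?_
      rw [← ENNReal.ofReal_mul (abs_nonneg _)]
      refine ENNReal.ofReal_le_ofReal ?_
      rw [show |r| * (δ / (8 * (|r| + 1))) = (|r| * δ) / (8 * (|r| + 1)) by ring,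
        div_le_div_iff₀ h8m (by norm_num)]
      nlinarith [abs_nonneg r]
    have e3 : (1 + ENNReal.ofReal |r|) * (ENNReal.ofReal c * ℙ A)
        ≤ ENNReal.ofReal (δ / 8) := by
      have h1 : (1 + ENNReal.ofReal |r|) = ENNReal.ofReal (1 + |r|) := by
        rw [ENNReal.ofReal_add zero_le_one (abs_nonneg r), ENNReal.ofReal_one]
      calc (1 + ENNReal.ofReal |r|) * (ENNReal.ofReal c * ℙ A)
          ≤ ENNReal.ofReal (1 + |r|) * (ENNReal.ofReal c * ENNReal.ofReal (κ / b)) := by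
            rw [h1]; exact mul_le_mul_right (mul_le_mul_right hPA _) _
        _ = ENNReal.ofReal ((1 + |r|) * (c * (κ / b))) := by
            rw [ENNReal.ofReal_mul (by positivity), ENNReal.ofReal_mul hc0]
        _ ≤ ENNReal.ofReal (δ / 8) := by
            refine ENNReal.ofReal_le_ofReal ?_
            have hb2 : 8 * (1 + |r|) * c * κ / δ ≤ b := le_max_right _ _
            rw [div_le_iff₀ hδ0] at hb2
            rw [show (1 + |r|) * (c * (κ / b)) = ((1 + |r|) * c * κ) / b by ring,
              div_le_div_iff₀ hb0 (by norm_num)]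
            nlinarith [abs_nonneg r, mul_nonneg (mul_nonneg (by positivity : (0:ℝ) ≤ 1 + |r|) hc0) hκ0]
    calc _ ≤ ENNReal.ofReal (δ/8) + ENNReal.ofReal (δ/8) + ENNReal.ofReal (δ/8) :=
          add_le_add (add_le_add e1 e2) e3
      _ = ENNReal.ofReal (δ/8 + δ/8 + δ/8) := by
          rw [ENNReal.ofReal_add (by positivity) (by positivity),
            ENNReal.ofReal_add (by positivity) (by positivity)]
      _ ≤ ENNReal.ofReal (3 * δ / 8) := ENNReal.ofReal_le_ofReal (by linarith)
  obtain ⟨YZ, hYZG, hYZae, hYZc⟩ := id hZap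
  have hZae : AEMeasurable Z ℙ := hZint.aemeasurable
  filter_upwards [hconv.eventually (gt_mem_nhds (show (0:ℝ) < δ / (4 * b) by positivity))]
    with n hn
  have hfnae : AEMeasurable (f n) ℙ := (hfint n).aemeasurable
  have hsubae : AEMeasurable (fun ω => f n ω - Z ω) ℙ := hfnae.sub hZae
  -- replace R by R'
  have e0 : ∫⁻ ω, ENNReal.ofReal (|f n ω - Z ω| * |R ω - r|) ∂ℙ
      = ∫⁻ ω, ENNReal.ofReal (|f n ω - Z ω| * |R' ω - r|) ∂ℙ :=
    lintegral_congr_ae (hRR'.mono fun ω h => by simp only [h])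
  rw [e0]
  -- pointwise split
  have hpt : ∀ ω, ENNReal.ofReal (|f n ω - Z ω| * |R' ω - r|) ≤
      ENNReal.ofReal (b * |f n ω - Z ω|)
        + A.indicator (fun ω => ENNReal.ofReal (|R' ω - r| * (|f n ω| + |Z ω|))) ω := by
    intro ω
    by_cases h : b < |R' ω - r|
    · rw [Set.indicator_of_mem (show ω ∈ A from h)]
      refine le_add_left (ENNReal.ofReal_le_ofReal ?_)
      rw [mul_comm]
      refine mul_le_mul_of_nonneg_left ?_ (abs_nonneg _)
      exact abs_sub _ _
    · rw [Set.indicator_of_notMem (show ω ∉ A from h)]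
      refine le_add_right (ENNReal.ofReal_le_ofReal ?_)
      rw [mul_comm b]
      exact mul_le_mul_of_nonneg_left (not_lt.mp h) (abs_nonneg _)
  have habs : AEMeasurable (fun ω => ENNReal.ofReal (b * |f n ω - Z ω|)) ℙ := by
    exact (ENNReal.measurable_ofReal.comp
      ((measurable_const.mul continuous_abs.measurable) : Measurable fun x : ℝ => b * |x|)
      ).comp_aemeasurable hsubae
  calc ∫⁻ ω, ENNReal.ofReal (|f n ω - Z ω| * |R' ω - r|) ∂ℙ
      ≤ ∫⁻ ω, (ENNReal.ofReal (b * |f n ω - Z ω|)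
          + A.indicator (fun ω => ENNReal.ofReal (|R' ω - r| * (|f n ω| + |Z ω|))) ω) ∂ℙ :=
        lintegral_mono hpt
    _ = (∫⁻ ω, ENNReal.ofReal (b * |f n ω - Z ω|) ∂ℙ)
          + ∫⁻ ω, A.indicator (fun ω => ENNReal.ofReal (|R' ω - r| * (|f n ω| + |Z ω|))) ω ∂ℙ :=
        lintegral_add_left' habs _
    _ ≤ ENNReal.ofReal (δ / 4) + (ENNReal.ofReal (3 * δ / 8) + ENNReal.ofReal (3 * δ / 8)) := by
        refine add_le_add ?_ ?_
        · -- first term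
          have hint1 : Integrable (fun ω => b * |f n ω - Z ω|) ℙ := by
            have := (((hfint n).sub hZint).abs).const_mul b
            simpa using this
          rw [← ofReal_integral_eq_lintegral_ofReal hint1
            (Eventually.of_forall fun ω => by positivity)]
          refine ENNReal.ofReal_le_ofReal ?_
          rw [integral_const_mul]
          calc b * ∫ ω, |f n ω - Z ω| ∂ℙ ≤ b * (δ / (4 * b)) := by
                exact mul_le_mul_of_nonneg_left (le_of_lt hn) (le_of_lt hb0)
            _ = δ / 4 := by field_simp
        · -- indicator term
          rw [lintegral_indicator hA]
          have hsplit : ∀ ω, ENNReal.ofReal (|R' ω - r| * (|f n ω| + |Z ω|))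
              = ENNReal.ofReal (|R' ω - r| * |f n ω|)
                + ENNReal.ofReal (|R' ω - r| * |Z ω|) := by
            intro ω
            rw [mul_add, ENNReal.ofReal_add (by positivity) (by positivity)]
          have hu : AEMeasurable (fun ω => ENNReal.ofReal (|R' ω - r| * |f n ω|)) ℙ :=
            ENNReal.measurable_ofReal.comp_aemeasurable
              (((hmR'.sub_const r).abs.aemeasurable).mul (aemeasurable_abs hfnae))
          calc ∫⁻ ω in A, ENNReal.ofReal (|R' ω - r| * (|f n ω| + |Z ω|)) ∂ℙ
              = ∫⁻ ω in A, (ENNReal.ofReal (|R' ω - r| * |f n ω|)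
                  + ENNReal.ofReal (|R' ω - r| * |Z ω|)) ∂ℙ :=
                lintegral_congr fun ω => hsplit ω
            _ = (∫⁻ ω in A, ENNReal.ofReal (|R' ω - r| * |f n ω|) ∂ℙ)
                  + ∫⁻ ω in A, ENNReal.ofReal (|R' ω - r| * |Z ω|) ∂ℙ :=
                lintegral_add_left' hu.restrict _
            _ ≤ _ := add_le_add (perg (f n) hfnae (hfap n)) (perg Z hZae hZap)
    _ = ENNReal.ofReal (δ / 4 + (3 * δ / 8 + 3 * δ / 8)) := by
        rw [ENNReal.ofReal_add (by positivity) (by positivity),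
          ENNReal.ofReal_add (by positivity) (by positivity)]
    _ ≤ ε := le_trans (ENNReal.ofReal_le_ofReal (by linarith)) hδε


end Stmt9Aux

open Stmt9Aux

/-- Uniform integrability of a family of functions:
`lim_{a→∞} sup_{Y ∈ G} 𝔼[|Y| 𝟙_{|Y|>a}] = 0`. -/
def UnifIntFamily {Ω : Type*} [MeasurableSpace Ω] (ℙ : Measure Ω)
    (G : Set (Ω → ℝ)) : Prop :=
  Tendsto (fun a : ℝ => ⨆ Y ∈ G, ∫⁻ ω in {ω | a < |Y ω|}, ENNReal.ofReal |Y ω| ∂ℙ)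
    atTop (nhds 0)

/-- If `𝒬 ⊆ 𝒟` and `R𝒬` are uniformly integrable, then the `L¹`-closure `𝒬̄` and `R𝒬̄` are
uniformly integrable, and `Z ↦ 𝔼[-Z(R-r)]` is `L¹`-continuous on `𝒬̄`. -/
theorem stmt9 {Ω : Type*} [MeasurableSpace Ω] (ℙ : Measure Ω) [IsProbabilityMeasure ℙ]
    (𝒬 : Set (Ω → ℝ))
    (h𝒬D : 𝒬 ⊆ {Z : Ω → ℝ | Integrable Z ℙ ∧ (∀ᵐ ω ∂ℙ, 0 ≤ Z ω) ∧ (∫ ω, Z ω ∂ℙ) = 1})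
    (h𝒬UI : UnifIntFamily ℙ 𝒬)
    (R : Ω → ℝ) (hR : Integrable R ℙ)
    (hRQ : UnifIntFamily ℙ ((fun Z => fun ω => R ω * Z ω) '' 𝒬))
    (r : ℝ) :
    let Qbar : Set (Ω → ℝ) := {Z | Integrable Z ℙ ∧ ∃ f : ℕ → Ω → ℝ, (∀ n, f n ∈ 𝒬) ∧
      Tendsto (fun n => ∫ ω, |f n ω - Z ω| ∂ℙ) atTop (nhds 0)}
    UnifIntFamily ℙ Qbar ∧
    UnifIntFamily ℙ ((fun Z => fun ω => R ω * Z ω) '' Qbar) ∧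
    ∀ Z ∈ Qbar, ∀ f : ℕ → Ω → ℝ, (∀ n, f n ∈ Qbar) →
      Tendsto (fun n => ∫ ω, |f n ω - Z ω| ∂ℙ) atTop (nhds 0) →
      Tendsto (fun n => ∫ ω, -(f n ω * (R ω - r)) ∂ℙ) atTop
        (nhds (∫ ω, -(Z ω * (R ω - r)) ∂ℙ)) := by
  intro Qbar
  have hQint : ∀ Y ∈ 𝒬, Integrable Y ℙ := fun Y hY => (h𝒬D hY).1
  have h𝒬UI' : Tendsto (fun a : ℝ => ui ℙ 𝒬 a) atTop (nhds 0) := h𝒬UI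
  have hRQ' : Tendsto (fun a : ℝ => ui ℙ ((fun Z => fun ω => R ω * Z ω) '' 𝒬) a)
      atTop (nhds 0) := hRQ
  -- every element of Qbar has approximation data
  have approx : ∀ g ∈ Qbar, ApproxData ℙ 𝒬 g := by
    intro g hg
    obtain ⟨hgint, s, hsQ, hsconv⟩ := hg
    obtain ⟨φ, hφ, hae⟩ := exists_subseq_ae hgint (fun n => hQint _ (hsQ n)) hsconv
    exact ⟨fun k => s (φ k), fun k => hsQ _, fun k => (hQint _ (hsQ _)).aemeasurable, hae⟩
  have part1 : UnifIntFamily ℙ Qbar :=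
    ui_tendsto h𝒬UI' fun g hg => ⟨hg.1.aemeasurable, approx g hg⟩
  have part2 : UnifIntFamily ℙ ((fun Z => fun ω => R ω * Z ω) '' Qbar) := by
    refine ui_tendsto hRQ' ?_
    rintro g ⟨Z, hZQ, rfl⟩
    obtain ⟨Y, hYG, hYae, hYc⟩ := approx Z hZQ
    exact ⟨hR.aemeasurable.mul hZQ.1.aemeasurable,
      fun k => fun ω => R ω * Y k ω, fun k => ⟨Y k, hYG k, rfl⟩,
      fun k => hR.aemeasurable.mul (hYae k),
      hYc.mono fun ω h => h.const_mul (R ω)⟩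
  refine ⟨part1, part2, ?_⟩
  -- continuity part
  intro Z hZ f hf hconv
  have hZint : Integrable Z ℙ := hZ.1
  -- integrability of R * g for g in Qbar
  obtain ⟨b₀, hb₀0, hb₀⟩ : ∃ b₀ : ℝ, 0 ≤ b₀ ∧
      ui ℙ ((fun Z => fun ω => R ω * Z ω) '' 𝒬) b₀ ≤ 1 := by
    have h1 := (ENNReal.tendsto_nhds_zero.mp hRQ' 1 zero_lt_one).and
      (eventually_ge_atTop (0:ℝ))
    obtain ⟨b₀, hb₁, hb₂⟩ := h1.exists
    exact ⟨b₀, hb₂, hb₁⟩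
  have hRgint : ∀ g ∈ Qbar, Integrable (fun ω => R ω * g ω) ℙ := by
    intro g hg
    obtain ⟨Y, hYG, hYae, hYc⟩ := approx g hg
    have hcb := closure_bound (G := (fun Z => fun ω => R ω * Z ω) '' 𝒬)
      (g := fun ω => R ω * g ω)
      (fun k => (⟨Y k, hYG k, rfl⟩ : _ ∈ (fun Z => fun ω => R ω * Z ω) '' 𝒬))
      (fun k => hR.aemeasurable.mul (hYae k))
      (hYc.mono fun ω h => h.const_mul (R ω)) Set.univ hb₀0
    rw [Measure.restrict_univ] at hcb
    refine ⟨(hR.aemeasurable.mul hg.1.aemeasurable).aestronglyMeasurable, ?_⟩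
    have hfin : ∫⁻ ω, (‖R ω * g ω‖₊ : ℝ≥0∞) ∂ℙ < ⊤ := by
      calc ∫⁻ ω, (‖R ω * g ω‖₊ : ℝ≥0∞) ∂ℙ
          = ∫⁻ ω, ENNReal.ofReal |R ω * g ω| ∂ℙ :=
            lintegral_congr fun ω => Real.enorm_eq_ofReal_abs _
        _ ≤ ui ℙ ((fun Z => fun ω => R ω * Z ω) '' 𝒬) b₀
              + ENNReal.ofReal b₀ * ℙ Set.univ := hcb
        _ ≤ 1 + ENNReal.ofReal b₀ := by
            rw [measure_univ, mul_one]; exact add_le_add hb₀ le_rfl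
        _ < ⊤ := ENNReal.add_lt_top.mpr ⟨ENNReal.one_lt_top, ENNReal.ofReal_lt_top⟩
    exact hfin
  have hWint : ∀ g ∈ Qbar, Integrable (fun ω => g ω * (R ω - r)) ℙ := by
    intro g hg
    have h1 : (fun ω => g ω * (R ω - r)) = fun ω => R ω * g ω - r * g ω := by
      funext ω; ring
    rw [h1]
    exact (hRgint g hg).sub (hg.1.const_mul r)
  simp only [integral_neg]
  refine Tendsto.neg ?_
  rw [tendsto_iff_norm_sub_tendsto_zero]
  have key := key_tendsto (r := r) h𝒬UI' hRQ' hR hZint (approx Z hZ)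
    (fun n => (hf n).1) (fun n => approx _ (hf n)) hconv
  set LL := fun n => ∫⁻ ω, ENNReal.ofReal (|f n ω - Z ω| * |R ω - r|) ∂ℙ with hLLdef
  have hDeq : ∀ n, (∫ ω, |f n ω - Z ω| * |R ω - r| ∂ℙ) = (LL n).toReal := by
    intro n
    have hmm : AEMeasurable (fun ω => |f n ω - Z ω| * |R ω - r|) ℙ :=
      (aemeasurable_abs ((hf n).1.aemeasurable.sub hZint.aemeasurable)).mul
        (aemeasurable_abs (hR.aemeasurable.sub aemeasurable_const))
    rw [integral_eq_lintegral_of_nonneg_ae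
      (Eventually.of_forall fun ω => mul_nonneg (abs_nonneg _) (abs_nonneg _))
      hmm.aestronglyMeasurable]
  have hD : Tendsto (fun n => ∫ ω, |f n ω - Z ω| * |R ω - r| ∂ℙ) atTop (nhds 0) := by
    have h2 := (ENNReal.tendsto_toReal (by simp : (0:ℝ≥0∞) ≠ ⊤)).comp key
    simp only [ENNReal.toReal_zero] at h2
    exact Tendsto.congr (fun n => (hDeq n).symm) h2
  refine squeeze_zero (fun n => norm_nonneg _) (fun n => ?_) hD
  rw [Real.norm_eq_abs, ← integral_sub (hWint _ (hf n)) (hWint Z hZ)]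
  calc |∫ ω, (f n ω * (R ω - r) - Z ω * (R ω - r)) ∂ℙ|
      ≤ ∫ ω, |f n ω * (R ω - r) - Z ω * (R ω - r)| ∂ℙ := by
        simpa [Real.norm_eq_abs] using
          norm_integral_le_integral_norm (μ := ℙ)
            (fun ω => f n ω * (R ω - r) - Z ω * (R ω - r))
    _ = ∫ ω, |f n ω - Z ω| * |R ω - r| ∂ℙ := by
        refine integral_congr_ae (Eventually.of_forall fun ω => ?_)
        show |f n ω * (R ω - r) - Z ω * (R ω - r)| = |f n ω - Z ω| * |R ω - r|
        rw [← sub_mul, abs_mul]
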